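/- For every integer n ≥ 2, the sum over all permutations σ of [n] of I^{j(σ)} equals 0, where I is the imaginary unit in the complex numbers and j(σ) = ∑_{1 ≤ y < x ≤ n} (-1)^{y+x} · sign(σ_x − σ_y) is the (possibly negative) bi-alternating inversion number. (This is equivalent to the statement that the standardized bi-alternating inversion number stat(σ) = (j(σ) + ⌊n/2⌋²)/2 satisfies ∑_{σ ∈ S_n} (-1)^{stat(σ)} = 0, i.e., it exhibits the cyclic sieving phenomenon with respect to fixed-point-free involutions on S_n.) -/

import Mathlib

open Finset

lemma swap01_lt {n : ℕ} {z0 z1 a b : Fin n} (h0 : (z0 : ℕ) = 0) (h1v : (z1 : ℕ) = 1)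
    (hab : a ≠ b) (h1 : ¬(a = z0 ∧ b = z1)) (h2 : ¬(a = z1 ∧ b = z0)) :
    (Equiv.swap z0 z1 a < Equiv.swap z0 z1 b ↔ a < b) := by
  simp only [Equiv.swap_apply_def, Fin.lt_def, Fin.ext_iff, h0, h1v, not_and,
    apply_ite (Fin.val)] at *
  split_ifs <;> omega

theorem bi_alternating_inversion_sum (n : ℕ) (hn : 2 ≤ n) :
    ∑ σ : Equiv.Perm (Fin n),
      Complex.I ^ (∑ p ∈ univ.filter (fun p : Fin n × Fin n => p.1 < p.2),
        ((-1 : ℤ) ^ ((p.1 : ℕ) + (p.2 : ℕ)) *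
          (if σ p.1 < σ p.2 then 1 else -1)))
      = 0 := by
  classical
  set z0 : Fin n := ⟨0, by omega⟩ with hz0
  set z1 : Fin n := ⟨1, by omega⟩ with hz1
  have hz01 : z0 ≠ z1 := by simp [hz0, hz1, Fin.ext_iff]
  have hz01lt : z0 < z1 := by simp [hz0, hz1, Fin.lt_def]
  set τ : Equiv.Perm (Fin n) := Equiv.swap z0 z1 with hτ
  set P := univ.filter (fun p : Fin n × Fin n => p.1 < p.2) with hP
  set g : Equiv.Perm (Fin n) → Fin n × Fin n → ℤ := fun σ p =>
    (-1 : ℤ) ^ ((p.1 : ℕ) + (p.2 : ℕ)) * (if σ p.1 < σ p.2 then 1 else -1) with hg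
  set j : Equiv.Perm (Fin n) → ℤ := fun σ => ∑ p ∈ P, g σ p with hj
  show ∑ σ : Equiv.Perm (Fin n), Complex.I ^ j σ = 0
  have I2 : Complex.I ^ (2:ℤ) = -1 := by
    rw [show (2:ℤ) = (2:ℕ) from rfl, zpow_natCast, Complex.I_sq]
  have Im2 : Complex.I ^ (-2:ℤ) = -1 := by
    rw [zpow_neg, show (2:ℤ) = (2:ℕ) from rfl, zpow_natCast, Complex.I_sq]; norm_num
  have swaplt : ∀ a b : Fin n, a ≠ b → ¬(a = z0 ∧ b = z1) → ¬(a = z1 ∧ b = z0) →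
      (τ a < τ b ↔ a < b) := fun a b hab h1 h2 => swap01_lt rfl rfl hab h1 h2
  have key : ∀ σ : Equiv.Perm (Fin n), Complex.I ^ j (τ * σ) = - Complex.I ^ j σ := by
    intro σ
    set a := σ⁻¹ z0 with ha
    set b := σ⁻¹ z1 with hb
    have hab : a ≠ b := fun h => hz01 (σ⁻¹.injective h)
    have hσa : σ a = z0 := σ.apply_symm_apply z0
    have hσb : σ b = z1 := σ.apply_symm_apply z1
    set p₀ : Fin n × Fin n := if a < b then (a, b) else (b, a) with hp₀
    have hp₀P : p₀ ∈ P := by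
      rcases lt_or_gt_of_ne hab with h|h <;> simp [hp₀, hP, h, not_lt_of_gt h]
    have hgp : ∀ p ∈ P, g (τ * σ) p = g σ p + (if p = p₀ then (-2) * g σ p else 0) := by
      intro p hp
      have hplt : p.1 < p.2 := by simpa [hP] using hp
      by_cases hpp : p = p₀
      · subst hpp
        rcases lt_or_gt_of_ne hab with h|h
        · have e : p₀ = (a, b) := by simp [hp₀, h]
          rw [e]
          simp [hg, Equiv.Perm.mul_apply, hσa, hσb, hτ, Equiv.swap_apply_left,
            Equiv.swap_apply_right, hz01lt, not_lt_of_gt hz01lt]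
          ring
        · have e : p₀ = (b, a) := by simp [hp₀, not_lt_of_gt h]
          rw [e]
          simp [hg, Equiv.Perm.mul_apply, hσa, hσb, hτ, Equiv.swap_apply_left,
            Equiv.swap_apply_right, hz01lt, not_lt_of_gt hz01lt]
          ring
      · have hne : σ p.1 ≠ σ p.2 := fun h => absurd (σ.injective h) (ne_of_lt hplt)
        have h1 : ¬(σ p.1 = z0 ∧ σ p.2 = z1) := by
          rintro ⟨u, v⟩
          apply hpp
          have e1 : p.1 = a := by rw [ha, ← u, ← Equiv.Perm.mul_apply, inv_mul_cancel, Equiv.Perm.one_apply]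
          have e2 : p.2 = b := by rw [hb, ← v, ← Equiv.Perm.mul_apply, inv_mul_cancel, Equiv.Perm.one_apply]
          have : a < b := by rw [← e1, ← e2]; exact hplt
          rw [hp₀, if_pos this, ← e1, ← e2]
        have h2 : ¬(σ p.1 = z1 ∧ σ p.2 = z0) := by
          rintro ⟨u, v⟩
          apply hpp
          have e1 : p.1 = b := by rw [hb, ← u, ← Equiv.Perm.mul_apply, inv_mul_cancel, Equiv.Perm.one_apply]
          have e2 : p.2 = a := by rw [ha, ← v, ← Equiv.Perm.mul_apply, inv_mul_cancel, Equiv.Perm.one_apply]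
          have hba : b < a := by rw [← e1, ← e2]; exact hplt
          rw [hp₀, if_neg (not_lt_of_gt hba), ← e1, ← e2]
        have hiff := swaplt (σ p.1) (σ p.2) hne h1 h2
        simp only [hg, Equiv.Perm.mul_apply, if_neg hpp, add_zero]
        simp only [hiff]
    have hjτ : j (τ * σ) = j σ + (-2) * g σ p₀ := by
      have : ∑ p ∈ P, g (τ * σ) p
          = ∑ p ∈ P, (g σ p + if p = p₀ then (-2) * g σ p else 0) :=
        Finset.sum_congr rfl hgp
      simp only [hj]
      rw [this, Finset.sum_add_distrib, Finset.sum_ite_eq' P p₀ (fun p => (-2) * g σ p),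
        if_pos hp₀P]
    have hgpm : g σ p₀ = 1 ∨ g σ p₀ = -1 := by
      by_cases hc : σ p₀.1 < σ p₀.2 <;>
        rcases Nat.even_or_odd ((p₀.1 : ℕ) + (p₀.2 : ℕ)) with h|h <;>
        simp [hg, hc, h.neg_one_pow]
    rcases hgpm with h|h
    · rw [hjτ, h, show j σ + (-2) * 1 = j σ + (-2) by ring,
        zpow_add₀ Complex.I_ne_zero, Im2]; ring
    · rw [hjτ, h, show j σ + (-2) * (-1) = j σ + 2 by ring,
        zpow_add₀ Complex.I_ne_zero, I2]; ring
  have hS : (∑ σ : Equiv.Perm (Fin n), Complex.I ^ j σ)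
      = - ∑ σ : Equiv.Perm (Fin n), Complex.I ^ j σ := by
    calc ∑ σ : Equiv.Perm (Fin n), Complex.I ^ j σ
        = ∑ σ : Equiv.Perm (Fin n), Complex.I ^ j (τ * σ) :=
          (Fintype.sum_equiv (Equiv.mulLeft τ)
            (fun σ => Complex.I ^ j (τ * σ)) (fun σ => Complex.I ^ j σ)
            (fun x => rfl)).symm
      _ = ∑ σ : Equiv.Perm (Fin n), -(Complex.I ^ j σ) :=
          Finset.sum_congr rfl (fun σ _ => key σ)
      _ = - ∑ σ : Equiv.Perm (Fin n), Complex.I ^ j σ := Finset.sum_neg_distrib _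
  linear_combination hS / 2
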